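/- Let F be a family of pairwise non-crossing simple cycles in a planar embedded graph, organized by the inclusion order of their interiors, and let C_i be the set of cycles at depth i in this forest. Then for each fixed i, the cycles in C_i are pairwise dart-disjoint when each is oriented clockwise. -/
import Mathlib


open SimpleGraph

/-- Let `F` be a finite family of pairwise non-crossing (nested) simple cycles in a
planar embedded graph, organized in the forest given by inclusion of their interiors
(modelled as sets of enclosed faces, distinct cycles having distinct interiors).
The depth of a cycle in this forest is the number of strict ancestors, i.e. the number
of family members whose interior strictly contains its interior.  If two cycles of the
family sharing a dart always have comparable interiors (as holds for nested isometric
cycles, each oriented clockwise), then cycles at the same depth are pairwise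
dart-disjoint. -/
theorem same_depth_cycles_dart_disjoint {V Face ι : Type*} [Fintype ι]
    (G : SimpleGraph V)
    (base : ι → V) (cyc : ∀ i : ι, G.Walk (base i) (base i))
    (hcyc : ∀ i, (cyc i).IsCycle)
    (int : ι → Set Face)
    (hinj : Function.Injective int)
    (hnested : ∀ i j : ι, int i ⊆ int j ∨ int j ⊆ int i ∨ Disjoint (int i) (int j))
    (hshare : ∀ i j : ι, (∃ d : G.Dart, d ∈ (cyc i).darts ∧ d ∈ (cyc j).darts) →
      int i ⊆ int j ∨ int j ⊆ int i)
    (depth : ι → ℕ)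
    (hdepth : ∀ i, depth i = Nat.card {j : ι // int i ⊂ int j}) :
    ∀ i j : ι, i ≠ j → depth i = depth j →
      ∀ d : G.Dart, d ∈ (cyc i).darts → d ∉ (cyc j).darts := by
  have key : ∀ i j : ι, int i ⊂ int j → depth j < depth i := by
    intro i j hij
    rw [hdepth i, hdepth j]
    show Nat.card ({k | int j ⊂ int k} : Set ι) < Nat.card ({k | int i ⊂ int k} : Set ι)
    rw [Nat.card_coe_set_eq, Nat.card_coe_set_eq]
    refine Set.ncard_lt_ncard ?_ (Set.toFinite _)
    constructor
    · intro k hk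
      exact hij.trans hk
    · intro h
      exact ssubset_irrefl (int j) (h hij)
  intro i j hij hdep d hdi hdj
  have h := hshare i j ⟨d, hdi, hdj⟩
  rcases h with h | h
  · have : int i ⊂ int j := h.ssubset_of_ne (fun e => hij (hinj e))
    have := key i j this
    omega
  · have : int j ⊂ int i := h.ssubset_of_ne (fun e => hij (hinj e.symm))
    have := key j i this
    omega
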